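/- Let n ≥ 2, θ ∈ ℝ, and α ∈ ℝ. For every ξ ∈ ℝⁿ at which q_θ(ξ) does not lie on the non-positive real axis, the complex power u_α(ξ) := q_θ(ξ)^α (principal branch) satisfies the Poisson-type identity Δ_θ u_α(ξ) = 2α(n + 2(α − 1)) · q_θ(ξ)^{α−1}; in particular for α = −1 the right-hand side vanishes and u_{−1} solves the θ-Laplace equation. -/

import Mathlib

/-- Unmixed second partial derivative in coordinate direction `j` of a complex-valued
function on `ℝⁿ`. -/
noncomputable def partial2 {n : ℕ} (u : (Fin n → ℝ) → ℂ) (j : Fin n) (ξ : Fin n → ℝ) : ℂ :=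
  iteratedDeriv 2 (fun t : ℝ => u (Function.update ξ j t)) (ξ j)

/-- The θ-Laplace–Beltrami operator `Δ_θ u = e^{−iπθ} ∂₀² u − Σ_{j≥1} ∂ⱼ² u`. -/
noncomputable def thetaLap {n : ℕ} [NeZero n] (θ : ℝ) (u : (Fin n → ℝ) → ℂ)
    (ξ : Fin n → ℝ) : ℂ :=
  Complex.exp (-(Real.pi * θ) * Complex.I) * partial2 u 0 ξ -
    ∑ j ∈ Finset.univ.filter (fun j : Fin n => j ≠ 0), partial2 u j ξ

/-- The θ-metric quadratic form `q_θ(ξ) = e^{iπθ} ξ₀² − Σ_{j≥1} ξⱼ²`. -/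
noncomputable def qform (n : ℕ) [NeZero n] (θ : ℝ) (ξ : Fin n → ℝ) : ℂ :=
  Complex.exp (Real.pi * θ * Complex.I) * (ξ 0 : ℂ) ^ 2 -
    ∑ j ∈ Finset.univ.filter (fun j : Fin n => j ≠ 0), (ξ j : ℂ) ^ 2

open Complex Function Finset
lemma hasDerivAt_quad (c b : ℂ) (t : ℝ) :
    HasDerivAt (fun s : ℝ => c * (s : ℂ) ^ 2 + b) (2 * c * t) t := by
  have h1 : HasDerivAt (fun s : ℝ => (s : ℂ)) 1 t := by
    simpa using (hasDerivAt_id t).ofReal_comp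
  have := ((h1.mul h1).const_mul c).add_const b
  convert this using 1
  · rfl
  · ext s; simp only [Pi.mul_apply]; ring
  · ring


lemma hasDerivAt_quad_cpow (c b β : ℂ) (t : ℝ)
    (h : c * (t : ℂ) ^ 2 + b ∈ Complex.slitPlane) :
    HasDerivAt (fun s : ℝ => (c * (s : ℂ) ^ 2 + b) ^ β)
      (β * (c * (t : ℂ) ^ 2 + b) ^ (β - 1) * (2 * c * t)) t := by
  have h2 := HasDerivAt.scomp (x := t) (h := fun s : ℝ => c * (s : ℂ) ^ 2 + b)
      (g₁ := fun z : ℂ => z ^ β)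
      ((Complex.hasStrictDerivAt_cpow_const h).hasDerivAt) (hasDerivAt_quad c b t)
  convert h2 using 1
  · rfl
  · rfl
  simp only [smul_eq_mul]
  ring

lemma iteratedDeriv2_quad_cpow (c b : ℂ) (α : ℝ) (x : ℝ)
    (h : c * (x : ℂ) ^ 2 + b ∈ Complex.slitPlane) :
    iteratedDeriv 2 (fun t : ℝ => (c * (t : ℂ) ^ 2 + b) ^ (α : ℂ)) x =
      (α : ℂ) * ((α : ℂ) - 1) * (c * (x : ℂ) ^ 2 + b) ^ ((α : ℂ) - 2) * (2 * c * x) ^ 2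
        + (α : ℂ) * (c * (x : ℂ) ^ 2 + b) ^ ((α : ℂ) - 1) * (2 * c) := by
  set f : ℝ → ℂ := fun t => (c * (t : ℂ) ^ 2 + b) ^ (α : ℂ) with hf
  set g : ℝ → ℂ := fun t => (α : ℂ) * (c * (t : ℂ) ^ 2 + b) ^ ((α : ℂ) - 1) * (2 * c * t)
    with hg
  have hopen : IsOpen {t : ℝ | c * (t : ℂ) ^ 2 + b ∈ Complex.slitPlane} := by
    apply Complex.isOpen_slitPlane.preimage
    exact (continuous_const.mul (Complex.continuous_ofReal.pow 2)).add continuous_const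
  have hev : deriv f =ᶠ[nhds x] g := by
    filter_upwards [hopen.mem_nhds h] with t ht
    exact (hasDerivAt_quad_cpow c b (α : ℂ) t ht).deriv
  have h2 : iteratedDeriv 2 f x = deriv (deriv f) x := by
    rw [iteratedDeriv_succ, iteratedDeriv_one]
  rw [h2, hev.deriv_eq]
  have hd1 : HasDerivAt (fun t : ℝ => (c * (t : ℂ) ^ 2 + b) ^ ((α : ℂ) - 1))
      (((α : ℂ) - 1) * (c * (x : ℂ) ^ 2 + b) ^ ((α : ℂ) - 1 - 1) * (2 * c * x)) x :=
    hasDerivAt_quad_cpow c b ((α : ℂ) - 1) x h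
  have hd2 : HasDerivAt (fun t : ℝ => 2 * c * (t : ℂ)) (2 * c) x := by
    have h1 : HasDerivAt (fun s : ℝ => (s : ℂ)) 1 x := by
      simpa using (hasDerivAt_id x).ofReal_comp
    simpa using h1.const_mul (2 * c)
  have hdg : HasDerivAt g
      ((α : ℂ) * (((α : ℂ) - 1) * (c * (x : ℂ) ^ 2 + b) ^ ((α : ℂ) - 1 - 1) * (2 * c * x))
          * (2 * c * x)
        + ((α : ℂ) * (c * (x : ℂ) ^ 2 + b) ^ ((α : ℂ) - 1)) * (2 * c)) x := by
    exact (hd1.const_mul (α : ℂ)).mul hd2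
  rw [hdg.deriv]
  have : ((α : ℂ) - 1 - 1) = (α : ℂ) - 2 := by ring
  rw [this]
  ring

noncomputable def qcoef (θ : ℝ) {n : ℕ} [NeZero n] (j : Fin n) : ℂ :=
  if j = 0 then Complex.exp (Real.pi * θ * Complex.I) else -1

lemma qform_update (n : ℕ) [NeZero n] (θ : ℝ) (ξ : Fin n → ℝ) (j : Fin n) (t : ℝ) :
    qform n θ (Function.update ξ j t) =
      qcoef θ j * (t : ℂ) ^ 2 + (qform n θ ξ - qcoef θ j * ((ξ j : ℝ) : ℂ) ^ 2) := by
  by_cases hj : j = 0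
  · subst hj
    unfold qform qcoef
    rw [if_pos rfl, Function.update_self]
    have hsum : ∑ k ∈ Finset.univ.filter (fun k : Fin n => k ≠ 0),
        ((Function.update ξ 0 t k : ℝ) : ℂ) ^ 2
        = ∑ k ∈ Finset.univ.filter (fun k : Fin n => k ≠ 0), ((ξ k : ℝ) : ℂ) ^ 2 :=
      Finset.sum_congr rfl fun k hk => by
        rw [Function.update_of_ne (by simpa using hk)]
    rw [hsum]; ring
  · unfold qform qcoef
    rw [if_neg hj, Function.update_of_ne (Ne.symm hj)]
    have hmem : j ∈ Finset.univ.filter (fun k : Fin n => k ≠ 0) := by simp [hj]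
    have h1 : ∑ k ∈ Finset.univ.filter (fun k : Fin n => k ≠ 0),
        ((Function.update ξ j t k : ℝ) : ℂ) ^ 2
        = (t : ℂ) ^ 2 + ∑ k ∈ (Finset.univ.filter (fun k : Fin n => k ≠ 0)).erase j,
            ((ξ k : ℝ) : ℂ) ^ 2 := by
      rw [← Finset.add_sum_erase _ _ hmem, Function.update_self]
      congr 1
      exact Finset.sum_congr rfl fun k hk => by
        rw [Function.update_of_ne (Finset.ne_of_mem_erase hk)]
    have h2 : ∑ k ∈ Finset.univ.filter (fun k : Fin n => k ≠ 0), ((ξ k : ℝ) : ℂ) ^ 2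
        = ((ξ j : ℝ) : ℂ) ^ 2 + ∑ k ∈ (Finset.univ.filter (fun k : Fin n => k ≠ 0)).erase j,
            ((ξ k : ℝ) : ℂ) ^ 2 :=
      (Finset.add_sum_erase _ _ hmem).symm
    rw [h1, h2]; ring

lemma partial2_qform (n : ℕ) [NeZero n] (θ α : ℝ) (ξ : Fin n → ℝ) (j : Fin n)
    (hξ : qform n θ ξ ∈ Complex.slitPlane) :
    partial2 (fun x => qform n θ x ^ (α : ℂ)) j ξ =
      (α : ℂ) * ((α : ℂ) - 1) * qform n θ ξ ^ ((α : ℂ) - 2) *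
          (2 * qcoef θ j * ((ξ j : ℝ) : ℂ)) ^ 2
        + (α : ℂ) * qform n θ ξ ^ ((α : ℂ) - 1) * (2 * qcoef θ j) := by
  unfold partial2
  have hfun : (fun t : ℝ => qform n θ (Function.update ξ j t) ^ (α : ℂ))
      = fun t : ℝ => (qcoef θ j * (t : ℂ) ^ 2
          + (qform n θ ξ - qcoef θ j * ((ξ j : ℝ) : ℂ) ^ 2)) ^ (α : ℂ) :=
    funext fun t => by rw [qform_update]
  have hx : qcoef θ j * ((ξ j : ℝ) : ℂ) ^ 2
      + (qform n θ ξ - qcoef θ j * ((ξ j : ℝ) : ℂ) ^ 2) = qform n θ ξ := by ring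
  rw [show (fun t : ℝ => (fun x => qform n θ x ^ (α : ℂ)) (Function.update ξ j t))
      = fun t : ℝ => (qcoef θ j * (t : ℂ) ^ 2
          + (qform n θ ξ - qcoef θ j * ((ξ j : ℝ) : ℂ) ^ 2)) ^ (α : ℂ) from hfun,
    iteratedDeriv2_quad_cpow _ _ α (ξ j) (by rw [hx]; exact hξ), hx]

/-- for `n ≥ 2`, wherever `q_θ(ξ)` avoids the non-positive real axis
(`Complex.slitPlane`), the principal power `u_α = q_θ^α` satisfies
`Δ_θ u_α = 2α(n + 2(α − 1)) q_θ^{α−1}`. -/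
theorem thetaLap_qform_cpow (n : ℕ) [NeZero n] (hn : 2 ≤ n) (θ α : ℝ) (ξ : Fin n → ℝ)
    (hξ : qform n θ ξ ∈ Complex.slitPlane) :
    thetaLap θ (fun x => qform n θ x ^ (α : ℂ)) ξ =
      2 * (α : ℂ) * ((n : ℂ) + 2 * ((α : ℂ) - 1)) * qform n θ ξ ^ ((α : ℂ) - 1) := by
  have hq0 : qform n θ ξ ≠ 0 := Complex.slitPlane_ne_zero hξ
  have hcard : (Finset.univ.filter (fun j : Fin n => j ≠ 0)).card = n - 1 := by
    rw [Finset.filter_ne', Finset.card_erase_of_mem (Finset.mem_univ _), Finset.card_univ,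
      Fintype.card_fin]
  have hsum : ∑ j ∈ Finset.univ.filter (fun j : Fin n => j ≠ 0),
      partial2 (fun x => qform n θ x ^ (α : ℂ)) j ξ
      = 4 * ((α : ℂ) * ((α : ℂ) - 1) * qform n θ ξ ^ ((α : ℂ) - 2)) *
          (∑ j ∈ Finset.univ.filter (fun j : Fin n => j ≠ 0), ((ξ j : ℝ) : ℂ) ^ 2)
        + ((n : ℂ) - 1) * (-2 * (α : ℂ) * qform n θ ξ ^ ((α : ℂ) - 1)) := by
    have : ∑ j ∈ Finset.univ.filter (fun j : Fin n => j ≠ 0),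
        partial2 (fun x => qform n θ x ^ (α : ℂ)) j ξ
        = ∑ j ∈ Finset.univ.filter (fun j : Fin n => j ≠ 0),
          (4 * ((α : ℂ) * ((α : ℂ) - 1) * qform n θ ξ ^ ((α : ℂ) - 2)) * ((ξ j : ℝ) : ℂ) ^ 2
            + (-2 * (α : ℂ) * qform n θ ξ ^ ((α : ℂ) - 1))) := by
      refine Finset.sum_congr rfl fun j hj => ?_
      rw [partial2_qform n θ α ξ j hξ,
        show qcoef θ j = -1 from if_neg (by simpa using (Finset.mem_filter.mp hj).2)]
      ring
    rw [this, Finset.sum_add_distrib, ← Finset.mul_sum, Finset.sum_const, nsmul_eq_mul, hcard,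
      Nat.cast_sub (by omega), Nat.cast_one]
  have hpow : qform n θ ξ ^ ((α : ℂ) - 1) = qform n θ ξ ^ ((α : ℂ) - 2) * qform n θ ξ := by
    rw [show ((α : ℂ) - 1) = ((α : ℂ) - 2) + 1 by ring, Complex.cpow_add _ _ hq0,
      Complex.cpow_one]
  have hqdef : qform n θ ξ = Complex.exp (Real.pi * θ * Complex.I) * ((ξ 0 : ℝ) : ℂ) ^ 2 -
      ∑ j ∈ Finset.univ.filter (fun j : Fin n => j ≠ 0), ((ξ j : ℝ) : ℂ) ^ 2 := rfl
  have hexp : Complex.exp (-(Real.pi * θ) * Complex.I) *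
      Complex.exp (Real.pi * θ * Complex.I) = 1 := by
    rw [← Complex.exp_add, show -((Real.pi : ℂ) * (θ : ℂ)) * Complex.I
      + (Real.pi : ℂ) * (θ : ℂ) * Complex.I = 0 by ring, Complex.exp_zero]
  unfold thetaLap
  rw [partial2_qform n θ α ξ 0 hξ, hsum, show qcoef θ 0 = Complex.exp (Real.pi * θ * Complex.I)
    from if_pos rfl]
  set E := Complex.exp (Real.pi * θ * Complex.I) with hE
  set E' := Complex.exp (-(Real.pi * θ) * Complex.I) with hE'
  set S := ∑ j ∈ Finset.univ.filter (fun j : Fin n => j ≠ 0), ((ξ j : ℝ) : ℂ) ^ 2 with hS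
  set u := qform n θ ξ ^ ((α : ℂ) - 2) with hu
  set v := qform n θ ξ ^ ((α : ℂ) - 1) with hv
  have hSq : S = E * ((ξ 0 : ℝ) : ℂ) ^ 2 - qform n θ ξ := by rw [hqdef]; ring
  rw [hSq]
  linear_combination (-4 * (α:ℂ) * ((α:ℂ) - 1)) * hpow
    + ((α:ℂ) * ((α:ℂ) - 1) * u * 4 * ((ξ 0 : ℝ) : ℂ) ^ 2 * E + 2 * (α:ℂ) * v) * hexp
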